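/- Let f : A → B be a homomorphism of commutative rings such that for every b ∈ B there exists a positive integer n with b^n in the image of f. Then the induced map Spec(B) → Spec(A), q ↦ f⁻¹(q), is injective: if two prime ideals of B have the same preimage in A, they are equal. -/

import Mathlib

/-- If `f : A → B` is a ring homomorphism such that every element of `B` has some positive
power lying in the image of `f`, then the induced map `Spec B → Spec A`, `q ↦ f⁻¹(q)`,
is injective. -/
theorem spec_comap_injective_of_pow_mem_range {A B : Type*} [CommRing A] [CommRing B]
    (f : A →+* B)
    (hpow : ∀ b : B, ∃ n : ℕ, 0 < n ∧ b ^ n ∈ Set.range f) :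
    Function.Injective (PrimeSpectrum.comap f) := by
  have key : ∀ p q : PrimeSpectrum B,
      PrimeSpectrum.comap f p = PrimeSpectrum.comap f q →
      ∀ b ∈ p.asIdeal, b ∈ q.asIdeal := by
    intro p q h b hb
    obtain ⟨n, hn, a, ha⟩ := hpow b
    have hap : f a ∈ p.asIdeal := ha ▸ (p.asIdeal.pow_mem_of_mem hb n hn)
    have haq : a ∈ q.asIdeal.comap f := by
      have : a ∈ p.asIdeal.comap f := hap
      rwa [show p.asIdeal.comap f = q.asIdeal.comap f from congrArg PrimeSpectrum.asIdeal h] at this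
    have : b ^ n ∈ q.asIdeal := ha ▸ haq
    exact q.isPrime.mem_of_pow_mem n this
  intro p q h
  exact PrimeSpectrum.ext (Ideal.ext fun b => ⟨key p q h b, key q p h.symm b⟩)
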